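/- The abelianization homomorphism from the semigroup of positive automorphisms of F₂ generated by T̂₁ and T̂₂ to SL₂(ℤ) sends T̂₁ to [[1,1],[0,1]] and T̂₂ to [[1,0],[1,1]], and is injective on this semigroup. -/

import Mathlib

noncomputable def That (i : Bool) : Monoid.End (FreeGroup Bool) :=
  if i then
    FreeGroup.lift (fun x => if x then FreeGroup.of true * FreeGroup.of false
      else FreeGroup.of false)
  else
    FreeGroup.lift (fun x => if x then FreeGroup.of true
      else FreeGroup.of false * FreeGroup.of true)

/-- Exponent sum of the generator `x` in an element of the free group
(the abelianization coordinates). -/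
noncomputable def expSum (x : Bool) : FreeGroup Bool →* Multiplicative ℤ :=
  FreeGroup.lift (fun y => if y = x then Multiplicative.ofAdd (1 : ℤ) else 1)

/-- The matrix of the endomorphism induced on the abelianization ℤ² of F₂:
row `i`, column `j` is the exponent sum of generator `j` in the image of generator `i`.
(Generator 0 is `a = of true`, generator 1 is `b = of false`.) -/
noncomputable def abMat (f : Monoid.End (FreeGroup Bool)) : Matrix (Fin 2) (Fin 2) ℤ :=
  Matrix.of fun i j =>
    Multiplicative.toAdd (expSum (j = 0) (f (FreeGroup.of (i = 0))))

/- ### Auxiliary lemmas -/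

lemma expSum_of (x y : Bool) : expSum x (FreeGroup.of y) = if y = x then Multiplicative.ofAdd (1:ℤ) else 1 :=
  FreeGroup.lift_apply_of

lemma That_of (i x : Bool) : That i (FreeGroup.of x) =
    if i then (if x then FreeGroup.of true * FreeGroup.of false else FreeGroup.of false)
    else (if x then FreeGroup.of true else FreeGroup.of false * FreeGroup.of true) := by
  cases i <;> simp only [That, if_true, if_false, Bool.false_eq_true] <;> exact FreeGroup.lift_apply_of

lemma abMat_That_true : abMat (That true) = !![1, 1; 0, 1] := by
  ext i j
  fin_cases i <;> fin_cases j <;>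
    simp [abMat, That_of, expSum_of, map_mul]

lemma abMat_That_false : abMat (That false) = !![1, 0; 1, 1] := by
  ext i j
  fin_cases i <;> fin_cases j <;>
    simp [abMat, That_of, expSum_of, map_mul]

lemma expSum_key (f : Monoid.End (FreeGroup Bool)) (j : Bool) (w : FreeGroup Bool) :
    Multiplicative.toAdd (expSum j (f w)) =
      Multiplicative.toAdd (expSum true w) * Multiplicative.toAdd (expSum j (f (FreeGroup.of true)))
      + Multiplicative.toAdd (expSum false w) * Multiplicative.toAdd (expSum j (f (FreeGroup.of false))) := by
  induction w using FreeGroup.induction_on with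
  | C1 => simp
  | of x => cases x <;> simp [show ∀ y, (pure y : FreeGroup Bool) = FreeGroup.of y from fun _ => rfl, expSum_of]
  | inv_of x ih => simp only [map_inv, toAdd_inv] at *; linarith
  | mul x y ihx ihy => simp only [map_mul, toAdd_mul] at *; linarith

lemma abMat_mul (f g : Monoid.End (FreeGroup Bool)) : abMat (f * g) = abMat g * abMat f := by
  ext i j
  rw [Matrix.mul_apply, Fin.sum_univ_two]
  have : (f * g) (FreeGroup.of (i = 0)) = f (g (FreeGroup.of (i = 0))) := rfl
  simp only [abMat, Matrix.of_apply, this]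
  rw [expSum_key f (j = 0) (g (FreeGroup.of (i = 0)))]
  norm_num

/- ### The monoid generated by L and R in SL₂(ℤ) is free -/

def mmat (i : Bool) : Matrix (Fin 2) (Fin 2) ℤ := if i then !![1,1;0,1] else !![1,0;1,1]

def matW (w : List Bool) : Matrix (Fin 2) (Fin 2) ℤ := (w.map mmat).prod

lemma matW_nil : matW [] = 1 := rfl

lemma matW_cons (i : Bool) (w : List Bool) : matW (i :: w) = mmat i * matW w := by
  simp [matW]

lemma matW_nonneg (w : List Bool) : ∀ i j, 0 ≤ matW w i j := by
  induction w with
  | nil => intro i j; fin_cases i <;> fin_cases j <;> simp [matW_nil, Matrix.one_apply]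
  | cons a w ih =>
    intro i j
    rw [matW_cons, Matrix.mul_apply, Fin.sum_univ_two]
    have h0 := ih 0 j; have h1 := ih 1 j
    cases a <;> fin_cases i <;> simp [mmat] <;> linarith

lemma matW_det (w : List Bool) : (matW w).det = 1 := by
  induction w with
  | nil => simp [matW_nil]
  | cons a w ih =>
    rw [matW_cons, Matrix.det_mul, ih, mul_one]
    cases a <;> simp [mmat, Matrix.det_fin_two_of]

/-- Difference of the row sums of a 2×2 matrix. -/
def rs (m : Matrix (Fin 2) (Fin 2) ℤ) : ℤ := (m 0 0 + m 0 1) - (m 1 0 + m 1 1)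

lemma rs_pos (w : List Bool) : 0 < rs (matW (true :: w)) := by
  have hn := matW_nonneg w
  have hd := matW_det w
  rw [Matrix.det_fin_two] at hd
  have h01 : 0 < matW w 0 0 + matW w 0 1 := by
    rcases (hn 0 0).lt_or_eq with h | h
    · linarith [hn 0 1]
    · rcases (hn 0 1).lt_or_eq with h' | h'
      · linarith [hn 0 0]
      · exfalso; rw [← h, ← h'] at hd; simp at hd
  rw [matW_cons]
  simp only [rs, Matrix.mul_apply, Fin.sum_univ_two, mmat, if_true]
  simp [Matrix.cons_val_zero, Matrix.cons_val_one]
  linarith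

lemma rs_neg (w : List Bool) : rs (matW (false :: w)) < 0 := by
  have hn := matW_nonneg w
  have hd := matW_det w
  rw [Matrix.det_fin_two] at hd
  have h01 : 0 < matW w 1 0 + matW w 1 1 := by
    rcases (hn 1 0).lt_or_eq with h | h
    · linarith [hn 1 1]
    · rcases (hn 1 1).lt_or_eq with h' | h'
      · linarith [hn 1 0]
      · exfalso; rw [← h, ← h'] at hd; simp at hd
  rw [matW_cons]
  simp only [rs, Matrix.mul_apply, Fin.sum_univ_two, mmat, Bool.false_eq_true, if_false]
  simp [Matrix.cons_val_zero, Matrix.cons_val_one]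
  linarith

lemma rs_nil : rs (matW []) = 0 := by simp [matW_nil, rs, Matrix.one_apply]

lemma mmat_cancel (i : Bool) {m m' : Matrix (Fin 2) (Fin 2) ℤ} (h : mmat i * m = mmat i * m') :
    m = m' := by
  have hi : (if i then !![(1:ℤ),-1;0,1] else !![1,0;-1,1]) * mmat i = 1 := by
    cases i <;> simp [mmat] <;> rw [Matrix.one_fin_two]
  calc m = ((if i then !![(1:ℤ),-1;0,1] else !![1,0;-1,1]) * mmat i) * m := by rw [hi, one_mul]
    _ = ((if i then !![(1:ℤ),-1;0,1] else !![1,0;-1,1]) * mmat i) * m' := by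
        rw [mul_assoc, h, mul_assoc]
    _ = m' := by rw [hi, one_mul]

lemma matW_inj : ∀ w w' : List Bool, matW w = matW w' → w = w' := by
  intro w
  induction w with
  | nil =>
    intro w' h
    cases w' with
    | nil => rfl
    | cons a w' =>
      exfalso
      have := rs_nil
      rw [h] at this
      cases a
      · exact absurd this (ne_of_lt (rs_neg w'))
      · exact absurd this (ne_of_gt (rs_pos w'))
  | cons a w ih =>
    intro w' h
    cases w' with
    | nil =>
      exfalso
      have := rs_nil
      rw [← h] at this
      cases a
      · exact absurd this (ne_of_lt (rs_neg w))
      · exact absurd this (ne_of_gt (rs_pos w))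
    | cons b w' =>
      have hab : a = b := by
        by_contra hne
        cases a <;> cases b <;> simp_all
        · have h1 := rs_neg w; have h2 := rs_pos w'; rw [h] at h1; linarith
        · have h1 := rs_pos w; have h2 := rs_neg w'; rw [h] at h1; linarith
      subst hab
      rw [matW_cons, matW_cons] at h
      rw [ih w' (mmat_cancel a h)]

/- ### Gluing -/

lemma matW_append (u v : List Bool) : matW (u ++ v) = matW u * matW v := by
  simp [matW]

lemma abMat_prod (w : List Bool) :
    abMat ((w.map That).prod) = matW w.reverse := by
  induction w with
  | nil =>
    have : ((List.nil.map That).prod : Monoid.End (FreeGroup Bool)) = 1 := rfl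
    rw [this]
    ext i j
    fin_cases i <;> fin_cases j <;>
      simp [abMat, expSum_of, matW_nil, Matrix.one_apply]
  | cons a w ih =>
    have : (((a :: w).map That).prod : Monoid.End (FreeGroup Bool)) =
        That a * (w.map That).prod := by simp
    rw [this, abMat_mul, ih, List.reverse_cons, matW_append]
    congr 1
    cases a
    · simp [matW, mmat, abMat_That_false]
    · simp [matW, mmat, abMat_That_true]

theorem stmt3 :
    abMat (That true) = !![1, 1; 0, 1] ∧
    abMat (That false) = !![1, 0; 1, 1] ∧
    (∀ f g : Monoid.End (FreeGroup Bool), abMat (f * g) = abMat g * abMat f) ∧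
    Set.InjOn abMat (Submonoid.closure {That true, That false} : Set (Monoid.End (FreeGroup Bool))) := by
  refine ⟨abMat_That_true, abMat_That_false, abMat_mul, ?_⟩
  intro f hf g hg hfg
  obtain ⟨lf, hlf, hlfp⟩ := Submonoid.exists_list_of_mem_closure hf
  obtain ⟨lg, hlg, hlgp⟩ := Submonoid.exists_list_of_mem_closure hg
  -- turn each list of endomorphisms into a list of Booleans
  have hlist : ∀ (l : List (Monoid.End (FreeGroup Bool))),
      (∀ y ∈ l, y ∈ ({That true, That false} : Set (Monoid.End (FreeGroup Bool)))) →
      ∃ w : List Bool, w.map That = l := by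
    intro l
    induction l with
    | nil => intro _; exact ⟨[], rfl⟩
    | cons a l ih =>
      intro h
      obtain ⟨w, hw⟩ := ih (fun y hy => h y (List.mem_cons_of_mem a hy))
      rcases h a List.mem_cons_self with ha | ha
      · exact ⟨true :: w, by simp [hw, ha]⟩
      · exact ⟨false :: w, by simp [hw, Set.mem_singleton_iff.mp ha]⟩
  obtain ⟨wf, hwf⟩ := hlist lf hlf
  obtain ⟨wg, hwg⟩ := hlist lg hlg
  have hf' : f = (wf.map That).prod := by rw [hwf, hlfp]
  have hg' : g = (wg.map That).prod := by rw [hwg, hlgp]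
  rw [hf', hg', abMat_prod, abMat_prod] at hfg
  have := matW_inj _ _ hfg
  have hww : wf = wg := by
    have := congrArg List.reverse this
    simpa using this
  rw [hf', hg', hww]
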